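/- Let C be a non-trivial strongly connected component in BPA*01. If p₁ and p₂ are alive exit states in C, then Extⁿ(p₁) = Extⁿ(p₂). -/

import Mathlib

/-- BPA*01 expressions over an action set `Act`. -/
inductive BExpr (Act : Type) : Type
  | dl : BExpr Act
  | emp : BExpr Act
  | act : Act → BExpr Act
  | seq : BExpr Act → BExpr Act → BExpr Act
  | alt : BExpr Act → BExpr Act → BExpr Act
  | star : BExpr Act → BExpr Act

variable {Act : Type}

/-- The termination predicate `↓` of BPA*01. -/
inductive BTerm : BExpr Act → Prop
  | emp : BTerm BExpr.emp
  | altl {p q : BExpr Act} : BTerm p → BTerm (BExpr.alt p q)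
  | altr {p q : BExpr Act} : BTerm q → BTerm (BExpr.alt p q)
  | seq {p q : BExpr Act} : BTerm p → BTerm q → BTerm (BExpr.seq p q)
  | star {p : BExpr Act} : BTerm (BExpr.star p)

/-- The transition relation `p →a p'` of BPA*01. -/
inductive BStep : BExpr Act → Act → BExpr Act → Prop
  | act {a : Act} : BStep (BExpr.act a) a BExpr.emp
  | altl {p q p' : BExpr Act} {a : Act} : BStep p a p' → BStep (BExpr.alt p q) a p'
  | altr {p q q' : BExpr Act} {a : Act} : BStep q a q' → BStep (BExpr.alt p q) a q'
  | seql {p q p' : BExpr Act} {a : Act} :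
      BStep p a p' → BStep (BExpr.seq p q) a (BExpr.seq p' q)
  | seqr {p q q' : BExpr Act} {a : Act} :
      BTerm p → BStep q a q' → BStep (BExpr.seq p q) a q'
  | star {p p' : BExpr Act} {a : Act} :
      BStep p a p' → BStep (BExpr.star p) a (BExpr.seq p' (BExpr.star p))

/-- `p → p'`: a transition with some label. -/
def BStepAny (p q : BExpr Act) : Prop := ∃ a, BStep p a q

/-- `p →* p'`: reachability. -/
def BReach (p q : BExpr Act) : Prop := Relation.ReflTransGen BStepAny p q

/-- `p` is normed: some terminating expression is reachable from `p`. -/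
def BNormed (p : BExpr Act) : Prop := ∃ q, BReach p q ∧ BTerm q

/-- A strongly connected component: a maximal set of mutually reachable states. -/
def IsSCC (C : Set (BExpr Act)) : Prop :=
  (∀ s ∈ C, ∀ t ∈ C, BReach s t) ∧
    ∀ D : Set (BExpr Act), C ⊆ D → (∀ s ∈ D, ∀ t ∈ D, BReach s t) → D = C

/-- A trivial SCC: a singleton `{s}` with no transition `s → s`. -/
def IsTrivialSCC (C : Set (BExpr Act)) : Prop := ∃ s, C = {s} ∧ ¬ BStepAny s s

/-- `C · q = { p · q | p ∈ C }`. -/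
def seqSet (C : Set (BExpr Act)) (q : BExpr Act) : Set (BExpr Act) :=
  (fun p => BExpr.seq p q) '' C

/-- A basic SCC: `C = C' · q*` for some set `C'` that is not an SCC. -/
def IsBasic (C : Set (BExpr Act)) : Prop :=
  ∃ (C' : Set (BExpr Act)) (q : BExpr Act), C = seqSet C' (BExpr.star q) ∧ ¬ IsSCC C'

/-- The set `Extⁿ(s)` of normed exit transitions from `s`, w.r.t. the SCC `C`. -/
def ExtN (C : Set (BExpr Act)) (s : BExpr Act) : Set (Act × BExpr Act) :=
  {e | BStep s e.1 e.2 ∧ e.2 ∉ C ∧ BNormed e.2}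

/-- `s ∈ C` is an alive exit state if `s↓` or `s` has a normed exit transition. -/
def AliveExit (C : Set (BExpr Act)) (s : BExpr Act) : Prop :=
  s ∈ C ∧ (BTerm s ∨ ∃ e, e ∈ ExtN C s)

/-- `E · q = { (a, r · q) | (a, r) ∈ E }`. -/
def extSeq (E : Set (Act × BExpr Act)) (q : BExpr Act) : Set (Act × BExpr Act) :=
  (fun e => (e.1, BExpr.seq e.2 q)) '' E

/-- Is the expression a star expression? -/
def isStarB : BExpr Act → Bool
  | BExpr.star _ => true
  | _ => false

/-- The measure `OC` on BPA*01 expressions. -/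
def OC : BExpr Act → ℕ
  | BExpr.dl => 0
  | BExpr.emp => 0
  | BExpr.act _ => 1
  | BExpr.seq _ q => if isStarB q then 0 else OC q + 1
  | BExpr.alt p q => max (OC p) (OC q) + 1
  | BExpr.star _ => 1

lemma bexpr_sizeOf_pos (p : BExpr Act) : 0 < sizeOf p := by cases p <;> simp

lemma step_target {p p' : BExpr Act} {a : Act} (h : BStep p a p') :
    p' = BExpr.emp ∨ ∃ x y, p' = BExpr.seq x y := by
  induction h with
  | act => exact Or.inl rfl
  | altl _ ih => exact ih
  | altr _ ih => exact ih
  | seql _ _ => exact Or.inr ⟨_, _, rfl⟩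
  | seqr _ _ ih => exact ih
  | star _ => exact Or.inr ⟨_, _, rfl⟩

lemma star_step {z t : BExpr Act} {a : Act} (h : BStep (BExpr.star z) a t) :
    ∃ z', t = BExpr.seq z' (BExpr.star z) ∧ BStep z a z' := by
  cases h with
  | star h => exact ⟨_, rfl, h⟩

lemma OC_step_le {p p' : BExpr Act} {a : Act} (h : BStep p a p') : OC p' ≤ OC p := by
  induction h with
  | act => simp [OC]
  | @altl p q p' a _ ih =>
    have : OC p ≤ OC (BExpr.alt p q) := by simp [OC]; omega
    exact ih.trans this
  | @altr p q q' a _ ih =>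
    have : OC q ≤ OC (BExpr.alt p q) := by simp [OC]; omega
    exact ih.trans this
  | seql _ _ => simp [OC]
  | @seqr p q q' a hterm h ih =>
    cases q with
    | star z =>
      obtain ⟨z', rfl, _⟩ := star_step h
      simp [OC, isStarB]
    | dl => simp [OC, isStarB] at ih ⊢; omega
    | emp => simp [OC, isStarB] at ih ⊢; omega
    | act b => simp [OC, isStarB] at ih ⊢; omega
    | seq x y => simp [OC, isStarB] at ih ⊢; omega
    | alt x y => simp [OC, isStarB] at ih ⊢; omega
  | star _ => simp [OC, isStarB]

lemma OC_reach_le {p q : BExpr Act} (h : BReach p q) : OC q ≤ OC p := by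
  induction h with
  | refl => exact le_rfl
  | tail _ hs ih => obtain ⟨a, hs⟩ := hs; exact (OC_step_le hs).trans ih

lemma bterm_seq_iff {p q : BExpr Act} : BTerm (BExpr.seq p q) ↔ BTerm p ∧ BTerm q := by
  constructor
  · intro h; cases h with | seq h1 h2 => exact ⟨h1, h2⟩
  · rintro ⟨h1, h2⟩; exact BTerm.seq h1 h2

lemma reach_term_left {s g : BExpr Act} (h : BReach s g) (hg : BTerm g) :
    ∀ u w, s = BExpr.seq u w → BNormed u := by
  induction h using Relation.ReflTransGen.head_induction_on with
  | refl => rintro u w rfl; exact ⟨u, Relation.ReflTransGen.refl, (bterm_seq_iff.mp hg).1⟩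
  | head hstep _ ih =>
    rintro u w rfl
    obtain ⟨a, hstep⟩ := hstep
    cases hstep with
    | seql h1 =>
      obtain ⟨q, hq1, hq2⟩ := ih _ _ rfl
      exact ⟨q, Relation.ReflTransGen.head ⟨a, h1⟩ hq1, hq2⟩
    | seqr h1 h2 => exact ⟨u, Relation.ReflTransGen.refl, h1⟩

lemma normed_left {u w : BExpr Act} (h : BNormed (BExpr.seq u w)) : BNormed u := by
  obtain ⟨g, h1, h2⟩ := h
  exact reach_term_left h1 h2 u w rfl

lemma star_tail_step {r z t : BExpr Act} {a : Act}
    (h : BStep (BExpr.seq r (BExpr.star z)) a t) :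
    ∃ r', t = BExpr.seq r' (BExpr.star z) := by
  cases h with
  | seql h => exact ⟨_, rfl⟩
  | seqr h1 h2 => exact (star_step h2).imp fun z' hz => hz.1

lemma star_tail_reach {r z t : BExpr Act} (h : BReach (BExpr.seq r (BExpr.star z)) t) :
    ∃ r', t = BExpr.seq r' (BExpr.star z) := by
  induction h with
  | refl => exact ⟨r, rfl⟩
  | tail _ hs ih =>
    obtain ⟨r', rfl⟩ := ih
    obtain ⟨a, hs⟩ := hs
    exact star_tail_step hs

lemma reach_seql {u v : BExpr Act} (w : BExpr Act) (h : BReach u v) :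
    BReach (BExpr.seq u w) (BExpr.seq v w) :=
  Relation.ReflTransGen.lift (fun x => BExpr.seq x w)
    (fun x y (hl : BStepAny x y) => (hl.imp fun _ h => BStep.seql h : BStepAny (BExpr.seq x w) (BExpr.seq y w))) u v h

lemma scc_insert {C : Set (BExpr Act)} (hC : IsSCC C) {p x : BExpr Act} (hp : p ∈ C)
    (h1 : BReach p x) (h2 : BReach x p) : x ∈ C := by
  have hmut : ∀ s ∈ insert x C, ∀ t ∈ insert x C, BReach s t := by
    rintro s (rfl | hs) t (rfl | ht)
    · exact Relation.ReflTransGen.refl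
    · exact h2.trans (hC.1 p hp t ht)
    · exact (hC.1 s hs p hp).trans h1
    · exact hC.1 s hs t ht
  have hD := hC.2 (insert x C) (Set.subset_insert _ _) hmut
  rw [← hD]; exact Set.mem_insert _ _

lemma scc_out_edge {C : Set (BExpr Act)} (hC : IsSCC C) (hnt : ¬ IsTrivialSCC C)
    {s : BExpr Act} (hs : s ∈ C) : ∃ t ∈ C, BStepAny s t := by
  by_cases h : ∃ t ∈ C, t ≠ s
  · obtain ⟨t, ht, hne⟩ := h
    rcases (hC.1 s hs t ht).cases_head with rfl | ⟨m, hm, hmt⟩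
    · exact absurd rfl hne
    · exact ⟨m, scc_insert hC hs (Relation.ReflTransGen.single hm)
        (hmt.trans (hC.1 t ht s hs)), hm⟩
  · push_neg at h
    have hCs : C = {s} := Set.eq_singleton_iff_unique_mem.mpr ⟨hs, fun t ht => h t ht⟩
    by_contra h'
    exact hnt ⟨s, hCs, fun hss => h' ⟨s, hs, hss⟩⟩

lemma scc_in_edge {C : Set (BExpr Act)} (hC : IsSCC C) (hnt : ¬ IsTrivialSCC C)
    {s : BExpr Act} (hs : s ∈ C) : ∃ t ∈ C, BStepAny t s := by
  by_cases h : ∃ t ∈ C, t ≠ s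
  · obtain ⟨t, ht, hne⟩ := h
    rcases (hC.1 t ht s hs).cases_tail with rfl | ⟨c, hc, hcs⟩
    · exact absurd rfl hne
    · exact ⟨c, scc_insert hC hs ((hC.1 s hs t ht).trans hc)
        (Relation.ReflTransGen.single hcs), hcs⟩
  · push_neg at h
    have hCs : C = {s} := Set.eq_singleton_iff_unique_mem.mpr ⟨hs, fun t ht => h t ht⟩
    by_contra h'
    exact hnt ⟨s, hCs, fun hss => h' ⟨s, hs, hss⟩⟩

def RC (C : Set (BExpr Act)) (x y : BExpr Act) : Prop := BStepAny x y ∧ x ∈ C ∧ y ∈ C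

lemma reach_in_C {C : Set (BExpr Act)} (hC : IsSCC C) {s t : BExpr Act}
    (ht : t ∈ C) (h : BReach s t) : s ∈ C → Relation.ReflTransGen (RC C) s t := by
  induction h using Relation.ReflTransGen.head_induction_on with
  | refl => intro _; exact Relation.ReflTransGen.refl
  | head hstep hrest ih =>
    intro hs
    have hc := scc_insert hC hs (Relation.ReflTransGen.single hstep)
      (hrest.trans (hC.1 t ht _ hs))
    exact Relation.ReflTransGen.head ⟨hstep, hs, hc⟩ (ih hc)

lemma proj_tail {C : Set (BExpr Act)}
    (hnoseqr : ¬ ∃ (u y t : BExpr Act) (a : Act),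
      BExpr.seq u y ∈ C ∧ t ∈ C ∧ BTerm u ∧ BStep y a t)
    {s t : BExpr Act} (h : Relation.ReflTransGen (RC C) s t) :
    ∀ u w, s = BExpr.seq u w → ∃ v, t = BExpr.seq v w ∧ BReach u v := by
  induction h using Relation.ReflTransGen.head_induction_on with
  | refl => rintro u w rfl; exact ⟨u, rfl, Relation.ReflTransGen.refl⟩
  | head hstep hrest ih =>
    rintro u w rfl
    obtain ⟨⟨a, hstep⟩, hsC, hcC⟩ := hstep
    cases hstep with
    | seql h1 =>
      obtain ⟨v, rfl, hv⟩ := ih _ _ rfl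
      exact ⟨v, rfl, Relation.ReflTransGen.head ⟨a, h1⟩ hv⟩
    | seqr h1 h2 => exact absurd ⟨u, w, _, a, hsC, hcC, h1, h2⟩ hnoseqr

lemma extn_empty {C : Set (BExpr Act)} (hC : IsSCC C) {z t₀ : BExpr Act} {b : Act}
    (ht₀ : t₀ ∈ C) (hzt : BStep (BExpr.star z) b t₀) {p : BExpr Act} (hp : p ∈ C) :
    ExtN C p = ∅ := by
  obtain ⟨z'', ht00, _⟩ := star_step hzt
  have hr := hC.1 t₀ ht₀ p hp
  rw [ht00] at hr
  obtain ⟨r, rfl⟩ := star_tail_reach hr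
  ext e
  simp only [ExtN, Set.mem_setOf_eq, Set.mem_empty_iff_false, iff_false]
  rintro ⟨hstep, hnC, hnorm⟩
  obtain ⟨r', he2⟩ := star_tail_step hstep
  obtain ⟨g, hge, hgt⟩ := hnorm
  obtain ⟨f, rfl⟩ := star_tail_reach (he2 ▸ hge)
  have hreach : BReach e.2 t₀ :=
    Relation.ReflTransGen.tail hge ⟨b, BStep.seqr (bterm_seq_iff.mp hgt).1 hzt⟩
  exact hnC (scc_insert hC hp (Relation.ReflTransGen.single ⟨e.1, hstep⟩)
    (hreach.trans (hC.1 t₀ ht₀ _ hp)))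

lemma mainAux (n : ℕ) : ∀ {C : Set (BExpr Act)} (p₁ p₂ : BExpr Act), sizeOf p₁ ≤ n →
    IsSCC C → ¬ IsTrivialSCC C → AliveExit C p₁ → AliveExit C p₂ →
    ExtN C p₁ = ExtN C p₂ ∧ (BTerm p₁ ↔ BTerm p₂) := by
  induction n with
  | zero =>
    intro C p₁ p₂ hsz _ _ _ _
    exact absurd hsz (by have := bexpr_sizeOf_pos p₁; omega)
  | succ n ih =>
    intro C p₁ p₂ hsz hC hnt h₁ h₂
    by_cases hseqr : ∃ (u y t : BExpr Act) (a : Act),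
        BExpr.seq u y ∈ C ∧ t ∈ C ∧ BTerm u ∧ BStep y a t
    · -- Case II: an internal seqr edge exists; the tail must be a star, and ExtN = ∅.
      obtain ⟨u, y, t, a, hsC, htC, hu, hyt⟩ := hseqr
      obtain ⟨z, rfl⟩ : ∃ z, y = BExpr.star z := by
        have h1 := OC_reach_le (hC.1 _ htC _ hsC)  -- OC (seq u y) ≤ OC t
        have h2 := OC_step_le hyt                   -- OC t ≤ OC y
        cases y
        case star z => exact ⟨z, rfl⟩
        all_goals (exfalso; simp [OC, isStarB] at h1 h2 ⊢; omega)
      have hE1 : ExtN C p₁ = ∅ := extn_empty hC htC hyt h₁.1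
      have hE2 : ExtN C p₂ = ∅ := extn_empty hC htC hyt h₂.1
      have hT1 : BTerm p₁ := h₁.2.resolve_right
        (by rintro ⟨e, he⟩; rw [hE1] at he; exact he)
      have hT2 : BTerm p₂ := h₂.2.resolve_right
        (by rintro ⟨e, he⟩; rw [hE2] at he; exact he)
      exact ⟨hE1.trans hE2.symm, iff_of_true hT1 hT2⟩
    · -- Case I: all internal edges are seql; common tail, recurse on left parts.
      obtain ⟨s, hsC, a₀, hstep0⟩ := scc_in_edge hC hnt h₁.1
      rcases step_target hstep0 with rfl | ⟨u₁, w, rfl⟩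
      · obtain ⟨t', _, a', ht'⟩ := scc_out_edge hC hnt h₁.1
        cases ht'
      · have hp₁C := h₁.1
        obtain ⟨u₂, rfl, hreach12⟩ :=
          proj_tail hseqr (reach_in_C hC h₂.1 (hC.1 _ hp₁C _ h₂.1) hp₁C) u₁ w rfl
        have hu₁ : (BExpr.seq u₁ w) ∈ C := hp₁C
        have hu₂ : (BExpr.seq u₂ w) ∈ C := h₂.1
        have hC₀ : IsSCC {u | BExpr.seq u w ∈ C} := by
          constructor
          · intro x hx y hy
            obtain ⟨v, hv, hr⟩ :=
              proj_tail hseqr (reach_in_C hC hy (hC.1 _ hx _ hy) hx) x w rfl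
            injection hv with e1 _
            subst e1
            exact hr
          · intro D hsub hmut
            apply Set.Subset.antisymm _ hsub
            intro d hd
            have hd1 : BReach (BExpr.seq u₁ w) (BExpr.seq d w) :=
              reach_seql w (hmut u₁ (hsub hp₁C) d hd)
            have hd2 : BReach (BExpr.seq d w) (BExpr.seq u₁ w) :=
              reach_seql w (hmut d hd u₁ (hsub hp₁C))
            exact scc_insert hC hp₁C hd1 hd2
        have hnt₀ : ¬ IsTrivialSCC {u | BExpr.seq u w ∈ C} := by
          rintro ⟨x, hxeq, hxnostep⟩
          obtain ⟨t', htC', a', ht'⟩ := scc_out_edge hC hnt hp₁C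
          cases ht' with
          | @seql _ _ p' _ h1 =>
            have e1 : u₁ = x := by
              have : u₁ ∈ ({x} : Set (BExpr Act)) := hxeq ▸ hu₁
              simpa using this
            have e2 : p' = x := by
              have : p' ∈ ({x} : Set (BExpr Act)) := hxeq ▸ htC'
              simpa using this
            exact hxnostep ⟨a', by rw [e1, e2] at h1; exact h1⟩
          | seqr h1 h2 => exact hseqr ⟨u₁, w, t', a', hp₁C, htC', h1, h2⟩
        have halive : ∀ u : BExpr Act, AliveExit C (BExpr.seq u w) →
            AliveExit {u | BExpr.seq u w ∈ C} u := by
          rintro u ⟨huC, hcase⟩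
          refine ⟨huC, ?_⟩
          rcases hcase with ht | ⟨⟨a, e⟩, hstep, hnC, hnorm⟩
          · exact Or.inl (bterm_seq_iff.mp ht).1
          · cases hstep with
            | @seql _ _ p' _ h1 =>
              exact Or.inr ⟨(a, p'), h1, fun hmem => hnC hmem, normed_left hnorm⟩
            | seqr h1 h2 => exact Or.inl h1
        have hsz' : sizeOf u₁ ≤ n := by
          have hs := BExpr.seq.sizeOf_spec u₁ w
          have := bexpr_sizeOf_pos w
          omega
        obtain ⟨hE₀, hT₀⟩ := ih u₁ u₂ hsz' hC₀ hnt₀ (halive u₁ h₁) (halive u₂ h₂)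
        have hincl : ∀ x y : BExpr Act,
            ExtN {u | BExpr.seq u w ∈ C} x = ExtN {u | BExpr.seq u w ∈ C} y →
            (BTerm x → BTerm y) →
            ExtN C (BExpr.seq x w) ⊆ ExtN C (BExpr.seq y w) := by
          intro x y hE hT
          rintro ⟨a, t⟩ ⟨hstep, hnC, hnorm⟩
          cases hstep with
          | @seql _ _ p' _ h1 =>
            have hmem : (a, p') ∈ ExtN {u | BExpr.seq u w ∈ C} x :=
              ⟨h1, fun hm => hnC hm, normed_left hnorm⟩
            rw [hE] at hmem
            obtain ⟨h2, _, _⟩ := hmem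
            exact ⟨BStep.seql h2, hnC, hnorm⟩
          | seqr h1 h2 => exact ⟨BStep.seqr (hT h1) h2, hnC, hnorm⟩
        refine ⟨Set.Subset.antisymm (hincl u₁ u₂ hE₀ hT₀.mp) (hincl u₂ u₁ hE₀.symm hT₀.mpr), ?_⟩
        rw [bterm_seq_iff, bterm_seq_iff, hT₀]

/-- If `p₁` and `p₂` are alive exit states of a non-trivial SCC `C`
in BPA*01, then `Extⁿ(p₁) = Extⁿ(p₂)`. -/
theorem alive_exit_same_extn {Act : Type} [Nonempty Act] {C : Set (BExpr Act)}
    (hC : IsSCC C) (hnt : ¬ IsTrivialSCC C)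
    {p₁ p₂ : BExpr Act} (h₁ : AliveExit C p₁) (h₂ : AliveExit C p₂) :
    ExtN C p₁ = ExtN C p₂ :=
  (mainAux (sizeOf p₁) p₁ p₂ le_rfl hC hnt h₁ h₂).1
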